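/- Let c ∈ (0,√2), ξ ∈ (0, c⁴/4), θ ∈ ℝ, and set s = √(c⁴ − 4ξ). Define G = (ξ − 1)(c² + s + 2θ²ξ)/(ξ·(c⁴ − 4ξ)·(−c² + s)) and D = (ξ − 1)(−c² + s − 2θ²ξ)/(ξ·(c⁴ − 4ξ)·(c² + s)). Then G > 0, D > 0, and G > D. -/
import Mathlib


open Real

/-- For `c ∈ (0,√2)`, `ξ ∈ (0, c⁴/4)`, `θ ∈ ℝ` and `s = √(c⁴ − 4ξ)`, the
quantities `G = (ξ−1)(c² + s + 2θ²ξ)/(ξ(c⁴−4ξ)(−c² + s))` and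
`D = (ξ−1)(−c² + s − 2θ²ξ)/(ξ(c⁴−4ξ)(c² + s))` satisfy `G > 0`, `D > 0`, and `G > D`. -/
theorem stmt6 (c ξ θ : ℝ) (hc : c ∈ Set.Ioo 0 (Real.sqrt 2))
    (hξ : ξ ∈ Set.Ioo 0 (c ^ 4 / 4))
    (s G D : ℝ) (hs : s = Real.sqrt (c ^ 4 - 4 * ξ))
    (hG : G = (ξ - 1) * (c ^ 2 + s + 2 * θ ^ 2 * ξ) / (ξ * (c ^ 4 - 4 * ξ) * (-c ^ 2 + s)))
    (hD : D = (ξ - 1) * (-c ^ 2 + s - 2 * θ ^ 2 * ξ) / (ξ * (c ^ 4 - 4 * ξ) * (c ^ 2 + s))) :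
    G > 0 ∧ D > 0 ∧ G > D := by
  obtain ⟨hc0, hc2⟩ := hc
  obtain ⟨hξ0, hξ4⟩ := hξ
  have h2 : c ^ 2 < 2 := by
    nlinarith [Real.sq_sqrt (by norm_num : (2:ℝ) ≥ 0), Real.sqrt_nonneg 2]
  have hξ1 : ξ < 1 := by nlinarith
  have h4 : 0 < c ^ 4 - 4 * ξ := by linarith
  have hss : s ^ 2 = c ^ 4 - 4 * ξ := by rw [hs]; exact Real.sq_sqrt h4.le
  have hs0 : 0 < s := by rw [hs]; exact Real.sqrt_pos.mpr h4
  have hc20 : 0 < c ^ 2 := by positivity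
  have hsc : s < c ^ 2 := by nlinarith
  have hθξ : 0 ≤ 2 * θ ^ 2 * ξ := by positivity
  have hnumG : 0 < c ^ 2 + s + 2 * θ ^ 2 * ξ := by linarith
  have hpos : 0 < ξ * (c ^ 4 - 4 * ξ) := mul_pos hξ0 h4
  have hdGne : ξ * (c ^ 4 - 4 * ξ) * (-c ^ 2 + s) ≠ 0 := by
    apply ne_of_lt
    exact mul_neg_of_pos_of_neg hpos (by linarith)
  have hdG'pos : 0 < ξ * (c ^ 4 - 4 * ξ) * (c ^ 2 - s) := mul_pos hpos (by linarith)
  have hdDpos : 0 < ξ * (c ^ 4 - 4 * ξ) * (c ^ 2 + s) := mul_pos hpos (by linarith)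
  have hGeq : G = (1 - ξ) * (c ^ 2 + s + 2 * θ ^ 2 * ξ) /
      (ξ * (c ^ 4 - 4 * ξ) * (c ^ 2 - s)) := by
    rw [hG, div_eq_div_iff hdGne (ne_of_gt hdG'pos)]
    ring
  have hGpos : G > 0 := by
    rw [hGeq]
    exact div_pos (mul_pos (by linarith) hnumG) hdG'pos
  have hDpos : D > 0 := by
    rw [hD]
    apply div_pos _ hdDpos
    exact mul_pos_of_neg_of_neg (by linarith) (by linarith)
  refine ⟨hGpos, hDpos, ?_⟩
  rw [hGeq, hD, gt_iff_lt, div_lt_div_iff₀ hdDpos hdG'pos]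
  nlinarith [mul_pos (mul_pos (mul_pos hpos (by linarith : (0:ℝ) < 1 - ξ)) hs0)
    (by nlinarith : (0:ℝ) < 4 * c ^ 2 + 4 * θ ^ 2 * ξ)]
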